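/- Let f : Σ* → ℚ, let d ∈ ℕ, and let R = [r_1,…,r_m] and C = [c_1,…,c_n] be sequences of words such that A(R,C,d) has full row rank. Let A_H = (α, μ, β) be an automaton associated to the d-closed table H(R,C). Let u ∈ Σ* and σ ∈ Σ be such that A_H is correct on u but not correct on uσ, and let c_j be the j-th word of C such that f(uσc_j) ≠ α·μ(uσ,1)·e_j. Set R' := R·[u] (the sequence R with u appended). Then the (m+1)×((d+1)n+1) matrix [A(R',C,d) | col_{R'}(σc_j)] has full row rank. -/

import Mathlib

open Polynomial Matrix

/-- Substitute `x + k` for `x` in a polynomial. -/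
noncomputable def shiftP (k : ℕ) (p : Polynomial ℚ) : Polynomial ℚ :=
  p.comp (Polynomial.X + Polynomial.C (k : ℚ))

/-- The extension of the transition map `μ` of a P-finite automaton to words:
`μ(σ₁⋯σₖ)(x) = μ(σ₁)(x)·μ(σ₂)(x+1)⋯μ(σₖ)(x+k-1)`, so that
`μ(ε)(x) = I` and `μ(wσ)(x) = μ(w)(x)·μ(σ)(x+|w|)`. -/
noncomputable def muWord {S ι : Type*} [Fintype ι] [DecidableEq ι]
    (μ : S → Matrix ι ι (Polynomial ℚ)) (w : List S) : Matrix ι ι (Polynomial ℚ) :=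
  (w.zipIdx.map (fun p => (μ p.1).map (shiftP p.2))).prod

/-- The function computed by the P-finite automaton `(α, μ, β)`:
`f_A(w) = α·μ(w,1)·β(|w|+1)`. -/
noncomputable def fAut {S ι : Type*} [Fintype ι] [DecidableEq ι]
    (α : ι → ℚ) (μ : S → Matrix ι ι (Polynomial ℚ)) (β : ι → Polynomial ℚ)
    (w : List S) : ℚ :=
  α ⬝ᵥ ((muWord μ w).map (Polynomial.eval (1 : ℚ))).mulVec
      (fun i => (β i).eval ((w.length : ℚ) + 1))

/-- The backward function of a P-finite automaton: `B_A(u)(x) = μ(u)(x)·β(x+|u|)`. -/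
noncomputable def backF {S ι : Type*} [Fintype ι] [DecidableEq ι]
    (μ : S → Matrix ι ι (Polynomial ℚ)) (β : ι → Polynomial ℚ)
    (w : List S) : ι → Polynomial ℚ :=
  (muWord μ w).mulVec (fun i => shiftP w.length (β i))


/-- The row of the table `H(R,C)` associated to a word `w`:
`row_C(w) = (f(w c₁), …, f(w cₙ))`. -/
noncomputable def tableRow {S : Type*} (f : List S → ℚ) {n : ℕ} (C : Fin n → List S)
    (w : List S) : Fin n → ℚ := fun j => f (w ++ C j)

/-- The matrix `A(R,C,d) = [Δ⁰H(R,C) | Δ¹H(R,C) | ⋯ | ΔᵈH(R,C)]`, an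
`m × (d+1)n` matrix with columns indexed by `Fin (d+1) × Fin n`, where
`Δ = diag(|r₁|+1, …, |rₘ|+1)` and `H(R,C)ᵢⱼ = f(rᵢcⱼ)`. -/
noncomputable def tableA {S : Type*} (f : List S → ℚ) {m n : ℕ}
    (R : Fin m → List S) (C : Fin n → List S) (d : ℕ) :
    Matrix (Fin m) (Fin (d + 1) × Fin n) ℚ :=
  fun i p => ((R i).length + 1 : ℚ) ^ (p.1 : ℕ) * f (R i ++ C p.2)

lemma muWord_append_singleton {S ι : Type*} [Fintype ι] [DecidableEq ι]
    (μ : S → Matrix ι ι (Polynomial ℚ)) (u : List S) (σ : S) :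
    muWord μ (u ++ [σ]) = muWord μ u * (μ σ).map (shiftP u.length) := by
  have h : (u ++ [σ]).zipIdx = u.zipIdx ++ [(σ, u.length)] := by simp [List.zipIdx_append]
  rw [muWord, h, List.map_append, List.prod_append]
  simp [muWord]

/-- Let `A(R,C,d)` have full row rank and let `A_H = (α, μ, β)` be
an automaton associated to the `d`-closed table `H(R,C)` (so `α = row_C(r₁)`,
`β = e₁`, and the matrices `μ σ` have entries of degree `≤ d` and witness
`d`-closedness).  If `A_H` is correct on `u` but not on `uσ`, and `c_j` is a column
word with `f(uσc_j) ≠ α·μ(uσ,1)·e_j`, then appending the row `u` yields a matrix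
`[A(R·[u],C,d) | col_{R·[u]}(σc_j)]` of full row rank `m+1`. -/
theorem augmented_table_full_row_rank
    {S : Type*} [Fintype S] (f : List S → ℚ) (m n d : ℕ)
    (hm : 0 < m) (hn : 0 < n)
    (R : Fin m → List S) (C : Fin n → List S)
    (hrank : (tableA f R C d).rank = m)
    (α : Fin n → ℚ) (μ : S → Matrix (Fin n) (Fin n) (Polynomial ℚ))
    (β : Fin n → Polynomial ℚ)
    (hα : α = tableRow f C (R ⟨0, hm⟩))
    (hβ : β = Pi.single (⟨0, hn⟩ : Fin n) (1 : Polynomial ℚ))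
    (hμdeg : ∀ (σ : S) (i j : Fin n), ((μ σ) i j).natDegree ≤ d)
    (hμclosed : ∀ (σ : S) (i : Fin m),
      Matrix.vecMul (tableRow f C (R i))
          ((μ σ).map (Polynomial.eval (((R i).length : ℚ) + 1)))
        = tableRow f C (R i ++ [σ]))
    (u : List S) (σ : S)
    (hu : Matrix.vecMul α ((muWord μ u).map (Polynomial.eval (1 : ℚ)))
        = tableRow f C u)
    (huσ : Matrix.vecMul α ((muWord μ (u ++ [σ])).map (Polynomial.eval (1 : ℚ)))
        ≠ tableRow f C (u ++ [σ]))
    (j : Fin n)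
    (hj : f ((u ++ [σ]) ++ C j)
        ≠ Matrix.vecMul α ((muWord μ (u ++ [σ])).map (Polynomial.eval (1 : ℚ))) j) :
    (Matrix.of (fun (i : Fin (m + 1)) (q : (Fin (d + 1) × Fin n) ⊕ Unit) =>
        Sum.elim (fun p => tableA f (Fin.snoc R u : Fin (m + 1) → List S) C d i p)
          (fun _ => f ((Fin.snoc R u : Fin (m + 1) → List S) i ++ (σ :: C j))) q)).rank = m + 1 := by
  classical
  set N : Matrix (Fin (m + 1)) ((Fin (d + 1) × Fin n) ⊕ Unit) ℚ :=
    Matrix.of (fun (i : Fin (m + 1)) (q : (Fin (d + 1) × Fin n) ⊕ Unit) =>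
        Sum.elim (fun p => tableA f (Fin.snoc R u : Fin (m + 1) → List S) C d i p)
          (fun _ => f ((Fin.snoc R u : Fin (m + 1) → List S) i ++ (σ :: C j))) q) with hNdef
  have hA : LinearIndependent ℚ (tableA f R C d).row := by
    rw [linearIndependent_iff_card_eq_finrank_span, Set.finrank,
      ← Matrix.rank_eq_finrank_span_row, hrank, Fintype.card_fin]
  have hLI : LinearIndependent ℚ N.row := by
    rw [Fintype.linearIndependent_iff]
    intro g hg
    have hg' : ∀ q, (∑ i : Fin m, g i.castSucc * N i.castSucc q)
        + g (Fin.last m) * N (Fin.last m) q = 0 := by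
      intro q
      have h := congrFun hg q
      simp only [Finset.sum_apply, Pi.smul_apply, smul_eq_mul, Pi.zero_apply, Matrix.row_apply] at h
      rw [Fin.sum_univ_castSucc] at h
      exact h
    by_cases hlast : g (Fin.last m) = 0
    · have hzero : ∀ i : Fin m, g i.castSucc = 0 := by
        apply Fintype.linearIndependent_iff.mp hA (fun i => g i.castSucc)
        funext p
        have h := hg' (Sum.inl p)
        simp only [hlast, zero_mul, add_zero] at h
        simp only [Finset.sum_apply, Pi.smul_apply, smul_eq_mul, Pi.zero_apply, Matrix.row_apply]
        rw [← h]
        refine Finset.sum_congr rfl fun i _ => ?_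
        simp [hNdef, tableA, Fin.snoc_castSucc]
      intro i
      refine Fin.lastCases hlast hzero i
    · exfalso
      set lam : Fin m → ℚ := fun i => -(g i.castSucc) / g (Fin.last m) with hlam
      have hrel : ∀ q, N (Fin.last m) q = ∑ i : Fin m, lam i * N i.castSucc q := by
        intro q
        have h := hg' q
        have h2 : ∑ i : Fin m, lam i * N i.castSucc q
            = (g (Fin.last m) * N (Fin.last m) q) / g (Fin.last m) := by
          have : ∑ i : Fin m, lam i * N i.castSucc q
              = (∑ i : Fin m, -(g i.castSucc * N i.castSucc q)) / g (Fin.last m) := by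
            rw [Finset.sum_div]
            refine Finset.sum_congr rfl fun i _ => ?_
            rw [hlam]; ring
          rw [this, Finset.sum_neg_distrib]
          congr 1
          linarith [h]
        rw [h2, mul_div_cancel_left₀ _ hlast]
      -- the A-part relation
      have hApart : ∀ (k : ℕ), k < d + 1 → ∀ (j' : Fin n),
          ((u.length : ℚ) + 1) ^ k * f (u ++ C j')
            = ∑ i : Fin m, lam i * ((((R i).length : ℚ) + 1) ^ k * f (R i ++ C j')) := by
        intro k hk j'
        have h := hrel (Sum.inl (⟨k, hk⟩, j'))
        simpa [hNdef, tableA, Fin.snoc_castSucc, Fin.snoc_last] using h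
      -- the extra-column relation
      have hcol : f (u ++ (σ :: C j)) = ∑ i : Fin m, lam i * f (R i ++ (σ :: C j)) := by
        have h := hrel (Sum.inr ⟨⟩)
        simpa [hNdef, Fin.snoc_castSucc, Fin.snoc_last] using h
      -- key: row_C(u) · M_σ(|u|+1) = ∑ λᵢ row_C(rᵢσ)
      have hkey : ∀ j' : Fin n,
          Matrix.vecMul (tableRow f C u)
              ((μ σ).map (Polynomial.eval ((u.length : ℚ) + 1))) j'
            = ∑ i : Fin m, lam i * tableRow f C (R i ++ [σ]) j' := by
        intro j'
        have hvm : ∀ (w : List S) (x : ℚ),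
            Matrix.vecMul (tableRow f C w) ((μ σ).map (Polynomial.eval x)) j'
              = ∑ i' : Fin n, f (w ++ C i') * Polynomial.eval x ((μ σ) i' j') := by
          intro w x
          simp [Matrix.vecMul, dotProduct, tableRow, Matrix.map_apply]
        rw [hvm]
        have heval : ∀ (i' : Fin n) (x : ℚ),
            Polynomial.eval x ((μ σ) i' j')
              = ∑ k ∈ Finset.range (d + 1), ((μ σ) i' j').coeff k * x ^ k :=
          fun i' x => Polynomial.eval_eq_sum_range' (Nat.lt_succ_of_le (hμdeg σ i' j')) x
        calc ∑ i' : Fin n, f (u ++ C i') * Polynomial.eval ((u.length : ℚ) + 1) ((μ σ) i' j')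
            = ∑ i' : Fin n, ∑ k ∈ Finset.range (d + 1),
                ((μ σ) i' j').coeff k * (((u.length : ℚ) + 1) ^ k * f (u ++ C i')) := by
              refine Finset.sum_congr rfl fun i' _ => ?_
              rw [heval, Finset.mul_sum]
              exact Finset.sum_congr rfl fun k _ => by ring
          _ = ∑ i' : Fin n, ∑ k ∈ Finset.range (d + 1), ((μ σ) i' j').coeff k *
                (∑ i : Fin m, lam i * ((((R i).length : ℚ) + 1) ^ k * f (R i ++ C i'))) := by
              refine Finset.sum_congr rfl fun i' _ => Finset.sum_congr rfl fun k hk => ?_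
              rw [hApart k (Finset.mem_range.mp hk) i']
          _ = ∑ i : Fin m, lam i * ∑ i' : Fin n, f (R i ++ C i') *
                (∑ k ∈ Finset.range (d + 1),
                  ((μ σ) i' j').coeff k * (((R i).length : ℚ) + 1) ^ k) := by
              calc ∑ i' : Fin n, ∑ k ∈ Finset.range (d + 1), ((μ σ) i' j').coeff k *
                      (∑ i : Fin m, lam i * ((((R i).length : ℚ) + 1) ^ k * f (R i ++ C i')))
                  = ∑ i' : Fin n, ∑ k ∈ Finset.range (d + 1), ∑ i : Fin m,
                      ((μ σ) i' j').coeff k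
                        * (lam i * ((((R i).length : ℚ) + 1) ^ k * f (R i ++ C i'))) := by
                    simp only [Finset.mul_sum]
                _ = ∑ i' : Fin n, ∑ i : Fin m, ∑ k ∈ Finset.range (d + 1),
                      ((μ σ) i' j').coeff k
                        * (lam i * ((((R i).length : ℚ) + 1) ^ k * f (R i ++ C i'))) :=
                    Finset.sum_congr rfl fun i' _ => Finset.sum_comm
                _ = ∑ i : Fin m, ∑ i' : Fin n, ∑ k ∈ Finset.range (d + 1),
                      ((μ σ) i' j').coeff k
                        * (lam i * ((((R i).length : ℚ) + 1) ^ k * f (R i ++ C i'))) :=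
                    Finset.sum_comm
                _ = ∑ i : Fin m, lam i * ∑ i' : Fin n, f (R i ++ C i') *
                      (∑ k ∈ Finset.range (d + 1),
                        ((μ σ) i' j').coeff k * (((R i).length : ℚ) + 1) ^ k) := by
                    refine Finset.sum_congr rfl fun i _ => ?_
                    rw [Finset.mul_sum]
                    refine Finset.sum_congr rfl fun i' _ => ?_
                    rw [Finset.mul_sum, Finset.mul_sum]
                    exact Finset.sum_congr rfl fun k _ => by ring
          _ = ∑ i : Fin m, lam i * ∑ i' : Fin n,
                f (R i ++ C i') * Polynomial.eval (((R i).length : ℚ) + 1) ((μ σ) i' j') := by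
              refine Finset.sum_congr rfl fun i _ => ?_
              congr 1
              exact Finset.sum_congr rfl fun i' _ => by rw [heval]
          _ = ∑ i : Fin m, lam i * tableRow f C (R i ++ [σ]) j' := by
              refine Finset.sum_congr rfl fun i _ => ?_
              rw [← hvm, hμclosed σ i]
      -- compute α·μ(uσ,1)
      have hmain : Matrix.vecMul α ((muWord μ (u ++ [σ])).map (Polynomial.eval (1 : ℚ))) j
          = ∑ i : Fin m, lam i * tableRow f C (R i ++ [σ]) j := by
        have hmap : ((muWord μ u) * ((μ σ).map (shiftP u.length))).map (Polynomial.eval (1 : ℚ))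
            = (muWord μ u).map (Polynomial.eval (1 : ℚ))
              * ((μ σ).map (shiftP u.length)).map (Polynomial.eval (1 : ℚ)) := by
          rw [← Polynomial.coe_evalRingHom, Matrix.map_mul]
        have hshift : ((μ σ).map (shiftP u.length)).map (Polynomial.eval (1 : ℚ))
            = (μ σ).map (Polynomial.eval ((u.length : ℚ) + 1)) := by
          ext i' j''
          simp [Matrix.map_apply, shiftP, Polynomial.eval_comp, add_comm]
        rw [muWord_append_singleton, hmap, hshift, ← Matrix.vecMul_vecMul, hu, hkey]
      apply hj
      rw [hmain]
      have hrw : ∀ i : Fin m, tableRow f C (R i ++ [σ]) j = f (R i ++ (σ :: C j)) := by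
        intro i
        simp [tableRow, List.append_assoc]
      calc f ((u ++ [σ]) ++ C j) = f (u ++ (σ :: C j)) := by rw [List.append_assoc]; rfl
        _ = ∑ i : Fin m, lam i * f (R i ++ (σ :: C j)) := hcol
        _ = ∑ i : Fin m, lam i * tableRow f C (R i ++ [σ]) j := by
            exact Finset.sum_congr rfl fun i _ => by rw [hrw]
  rw [hLI.rank_matrix, Fintype.card_fin]
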